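/- arXiv:1302.3722 — 2 statements merged into one kernel-verified Lean document; each statement's English description precedes it below -/
import Mathlib

section
/- Let α ∈ (0,1/2], β, γ ∈ [0,1), and n ∈ ℕ. Set r = r(α,β,γ,n), u = r(α,β,{β+α},n) and v = r(α,γ,{γ+α},n), where {·} denotes the fractional part. Then, regarding the letters as integers 0 and 1, r_k = r_{k−1} + u_k − v_k for every k with 1 ≤ k ≤ n−1. (The words u and v are Sturmian words of slope α.) -/
open scoped Classical

/-- Membership of `x` in the circular interval `[β,γ)`: it means `β ≤ x < γ`
when `β < γ`; `x ≥ β` or `x < γ` when `γ < β`; and never holds when `β = γ`. -/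
def inCirc (β γ x : ℝ) : Prop :=
  if β < γ then β ≤ x ∧ x < γ
  else if γ < β then β ≤ x ∨ x < γ
  else False

/-- The rotation word `r(α,β,γ,n)` as a list of booleans of length `n`:
its `i`-th letter is `1` iff the fractional part `{iα}` lies in `[β,γ)`. -/
noncomputable def rotWord (α β γ : ℝ) (n : ℕ) : List Bool :=
  (List.range n).map fun i => if inCirc β γ (Int.fract (i * α)) then true else false

/-- The set `R(n)` of all rotation words of length `n`. -/
def RotWords (n : ℕ) : Set (List Bool) :=
  {w | ∃ α ∈ Set.Ico (0:ℝ) 1, ∃ β ∈ Set.Ico (0:ℝ) 1, ∃ γ ∈ Set.Ico (0:ℝ) 1,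
    w = rotWord α β γ n}

/-- `numRot n = f(n)` is the number of binary rotation words of length `n`. -/
noncomputable def numRot (n : ℕ) : ℕ := (RotWords n).ncard

/-- The set `St(n,α)` of Sturmian words of length `n` and slope `α`:
rotation words `r(α,β,{β+α},n)`, `β ∈ [0,1)`. -/
def St (n : ℕ) (α : ℝ) : Set (List Bool) :=
  {w | ∃ β ∈ Set.Ico (0:ℝ) 1, w = rotWord α β (Int.fract (β + α)) n}

lemma fract_cases (u : ℝ) (h1 : -1 ≤ u) (h2 : u < 1) :
    Int.fract u = u ∨ Int.fract u = u + 1 := by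
  rcases le_or_gt 0 u with h | h
  · exact Or.inl (Int.fract_eq_self.2 ⟨h, h2⟩)
  · right
    have h3 := Int.fract_add_intCast u 1
    push_cast at h3
    rw [← h3]
    exact Int.fract_eq_self.2 ⟨by linarith, by linarith⟩

lemma fract_sub_left (a b : ℝ) : Int.fract (Int.fract a - b) = Int.fract (a - b) := by
  have h : Int.fract a - b = a - b - (⌊a⌋ : ℤ) := by
    unfold Int.fract; ring
  rw [h, Int.fract_sub_intCast]

lemma fract_sub_right (a b : ℝ) : Int.fract (a - Int.fract b) = Int.fract (a - b) := by
  have h : a - Int.fract b = a - b + (⌊b⌋ : ℤ) := by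
    unfold Int.fract; ring
  rw [h, Int.fract_add_intCast]

lemma inCirc_iff (β γ x : ℝ) (hβ0 : 0 ≤ β) (hβ1 : β < 1) (hγ0 : 0 ≤ γ) (hγ1 : γ < 1)
    (hx0 : 0 ≤ x) (hx1 : x < 1) :
    inCirc β γ x ↔ Int.fract (x - β) < Int.fract (γ - β) := by
  have hf1 : Int.fract (x - β) = if β ≤ x then x - β else x - β + 1 := by
    split_ifs with h
    · exact Int.fract_eq_self.2 ⟨by linarith, by linarith⟩
    · have h3 := Int.fract_add_intCast (x - β) 1
      push_cast at h3
      rw [← h3]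
      exact Int.fract_eq_self.2 ⟨by linarith, by linarith⟩
  have hf2 : Int.fract (γ - β) = if β ≤ γ then γ - β else γ - β + 1 := by
    split_ifs with h
    · exact Int.fract_eq_self.2 ⟨by linarith, by linarith⟩
    · have h3 := Int.fract_add_intCast (γ - β) 1
      push_cast at h3
      rw [← h3]
      exact Int.fract_eq_self.2 ⟨by linarith, by linarith⟩
  rw [hf1, hf2]
  unfold inCirc
  split_ifs with h1 h2 h3 h4 h5 h6 h7 h8 <;>
    constructor <;> intro h' <;> (try casesm* _ ∨ _, _ ∧ _) <;>
    first
      | linarith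
      | (constructor <;> linarith)
      | (left; linarith)
      | (right; linarith)
      | exact h'.elim

lemma core (α L s s' t : ℝ) (hα0 : 0 < α) (hα1 : α < 1)
    (hL0 : 0 ≤ L) (hL1 : L < 1) (hs0 : 0 ≤ s) (hs1 : s < 1)
    (hs'0 : 0 ≤ s') (hs'1 : s' < 1) (ht0 : 0 ≤ t) (ht1 : t < 1)
    (hs' : s' = s - α ∨ s' = s - α + 1) (ht : t = s - L ∨ t = s - L + 1) :
    ((if s < L then 1 else 0 : ℤ)) =
      (if s' < L then 1 else 0) + (if s < α then 1 else 0) - (if t < α then 1 else 0) := by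
  rcases hs' with rfl | rfl <;> rcases ht with rfl | rfl <;> split_ifs <;>
    first | omega | (exfalso; linarith)

lemma coe_range (n : ℕ) :
    (do let a ← List.range n; pure ((a:ℕ):ℝ)) = (List.range n).map (fun a => ((a:ℕ):ℝ)) := by
  induction n with
  | zero => rfl
  | succ m ih => rw [List.range_succ]; simp_all

lemma rotWord_getD (α β γ : ℝ) (n k : ℕ) (h : k < n) :
    (rotWord α β γ n).getD k false =
      if inCirc β γ (Int.fract (k * α)) then true else false := by
  unfold rotWord
  rw [coe_range]
  have hl : k < (((List.range n).map fun a => ((a:ℕ):ℝ)).map fun i =>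
      if inCirc β γ (Int.fract (i * α)) then true else false).length := by
    rw [List.length_map, List.length_map, List.length_range]; exact h
  rw [List.getD_eq_getElem _ _ hl, List.getElem_map, List.getElem_map, List.getElem_range]

/-- For `α ∈ (0,1/2]`, `β,γ ∈ [0,1)`, setting `r = r(α,β,γ,n)`,
`u = r(α,β,{β+α},n)` and `v = r(α,γ,{γ+α},n)` (Sturmian words of slope `α`),
we have `r_k = r_{k-1} + u_k - v_k` for every `1 ≤ k ≤ n-1`. -/
theorem rotation_from_sturmian_pair (α β γ : ℝ) (n : ℕ)
    (hα : α ∈ Set.Ioc (0:ℝ) (1/2 : ℝ)) (hβ : β ∈ Set.Ico (0:ℝ) 1)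
    (hγ : γ ∈ Set.Ico (0:ℝ) 1) :
    ∀ k : ℕ, 1 ≤ k → k ≤ n - 1 →
      (((rotWord α β γ n).getD k false).toNat : ℤ) =
        (((rotWord α β γ n).getD (k - 1) false).toNat : ℤ)
          + (((rotWord α β (Int.fract (β + α)) n).getD k false).toNat : ℤ)
          - (((rotWord α γ (Int.fract (γ + α)) n).getD k false).toNat : ℤ) := by
  obtain ⟨hα0, hα2⟩ := hα
  obtain ⟨hβ0, hβ1⟩ := hβ
  obtain ⟨hγ0, hγ1⟩ := hγ
  have hα1 : α < 1 := by linarith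
  intro k hk1 hk2
  obtain ⟨j, rfl⟩ : ∃ j, k = j + 1 := ⟨k - 1, by omega⟩
  have hkn : j + 1 < n := by omega
  have hjn : j < n := by omega
  have hj1 : j + 1 - 1 = j := by omega
  rw [hj1, rotWord_getD _ _ _ _ _ hkn, rotWord_getD _ _ _ _ _ hkn,
    rotWord_getD _ _ _ _ _ hkn, rotWord_getD _ _ _ _ _ hjn]
  have hb0 := Int.fract_nonneg (β + α)
  have hb1 := Int.fract_lt_one (β + α)
  have hc0 := Int.fract_nonneg (γ + α)
  have hc1 := Int.fract_lt_one (γ + α)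
  rw [inCirc_iff β γ _ hβ0 hβ1 hγ0 hγ1 (Int.fract_nonneg _) (Int.fract_lt_one _),
    inCirc_iff β γ _ hβ0 hβ1 hγ0 hγ1 (Int.fract_nonneg _) (Int.fract_lt_one _),
    inCirc_iff β _ _ hβ0 hβ1 hb0 hb1 (Int.fract_nonneg _) (Int.fract_lt_one _),
    inCirc_iff γ _ _ hγ0 hγ1 hc0 hc1 (Int.fract_nonneg _) (Int.fract_lt_one _)]
  simp only [fract_sub_left]
  rw [show β + α - β = α by ring, show γ + α - γ = α by ring]
  have hfα : Int.fract α = α := Int.fract_eq_self.2 ⟨le_of_lt hα0, hα1⟩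
  simp only [hfα]
  set s := Int.fract ((↑(j + 1) : ℝ) * α - β) with hs
  set s' := Int.fract ((↑j : ℝ) * α - β) with hs'def
  set t := Int.fract ((↑(j + 1) : ℝ) * α - γ) with ht
  set L := Int.fract (γ - β) with hL
  have hs0 : 0 ≤ s := Int.fract_nonneg _
  have hs1 : s < 1 := Int.fract_lt_one _
  have hs'0 : 0 ≤ s' := Int.fract_nonneg _
  have hs'1 : s' < 1 := Int.fract_lt_one _
  have ht0 : 0 ≤ t := Int.fract_nonneg _
  have ht1 : t < 1 := Int.fract_lt_one _
  have hL0 : 0 ≤ L := Int.fract_nonneg _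
  have hL1 : L < 1 := Int.fract_lt_one _
  have hs'eq : s' = Int.fract (s - α) := by
    rw [hs'def, hs, fract_sub_left]
    congr 1
    push_cast
    ring
  have hteq : t = Int.fract (s - L) := by
    rw [ht, hs, hL, fract_sub_left, fract_sub_right]
    congr 1
    ring
  have hds' : s' = s - α ∨ s' = s - α + 1 := by
    rw [hs'eq]
    exact fract_cases _ (by linarith) (by linarith)
  have hdt : t = s - L ∨ t = s - L + 1 := by
    rw [hteq]
    exact fract_cases _ (by linarith) (by linarith)
  have hcore := core α L s s' t hα0 hα1 hL0 hL1 hs0 hs1 hs'0 hs'1 ht0 ht1 hds' hdt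
  split_ifs at hcore ⊢ <;> simp_all
end

section
/- Let d = (d_1, d_2, …) be a directive sequence of positive integers, let u, v ∈ Fac(d) be binary words of length n, and let r be a binary word of length n+1 generated by the ordered pair (u,v). If r contains a factor 0 1 0^{k₁} 1 0^{k₂} 1 with k₂ > k₁ > 0, then there exists m ≥ 1 such that k₁ = l_m − 1 and (k₂ + 1) mod l_m = l_{m−1}. -/
/-- The ordered pair `(u,v)` of words of length `n` generates the word `r` of
length `n+1`: regarding letters as integers, `r_{k+1} = r_k + u_k - v_k`
for every `0 ≤ k ≤ n-1`. -/
def Generates (u v r : List Bool) : Prop :=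
  ∀ k, k < u.length →
    ((r.getD (k+1) false).toNat : ℤ) =
      ((r.getD k false).toNat : ℤ) + ((u.getD k false).toNat : ℤ)
        - ((v.getD k false).toNat : ℤ)

/-- `stdWord d (n+1)` is the standard word `s_n` for the directive sequence
`(d 1, d 2, …)`: `stdWord d 0 = s_{-1} = 1`, `stdWord d 1 = s_0 = 0`,
and `s_n = s_{n-1}^{d_n} s_{n-2}` for `n ≥ 1`. -/
def stdWord (d : ℕ → ℕ) : ℕ → List Bool
  | 0 => [true]
  | 1 => [false]
  | (n + 2) => (List.replicate (d (n + 1)) (stdWord d (n + 1))).flatten ++ stdWord d n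

/-- `stdLen d (n+1)` is the length `l_n` of the standard word `s_n`;
so `l_{-1} = l_0 = 1` and `l_n = d_n l_{n-1} + l_{n-2}`. -/
def stdLen (d : ℕ → ℕ) : ℕ → ℕ
  | 0 => 1
  | 1 => 1
  | (n + 2) => d (n + 1) * stdLen d (n + 1) + stdLen d n

/-- `Fac d` is the Sturmian language `St(α_d)` of the directive sequence `d`:
all factors of the standard words `s_n`, `n ≥ 0`. -/
def Fac (d : ℕ → ℕ) : Set (List Bool) :=
  {w | ∃ m : ℕ, w <:+: stdWord d (m + 1)}

/-! ### The desubstitution morphism -/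

/-- The morphism `false ↦ 0^a 1`, `true ↦ 0`. -/
def hmap (a : ℕ) : List Bool → List Bool
  | [] => []
  | true :: z => false :: hmap a z
  | false :: z => (List.replicate a false ++ [true]) ++ hmap a z

def dshift (d : ℕ → ℕ) : ℕ → ℕ := fun i => d (i + 1)

@[simp] lemma hmap_nil (a : ℕ) : hmap a [] = [] := rfl

@[simp] lemma hmap_cons_true (a : ℕ) (z : List Bool) :
    hmap a (true :: z) = false :: hmap a z := rfl

@[simp] lemma hmap_cons_false (a : ℕ) (z : List Bool) :
    hmap a (false :: z) = (List.replicate a false ++ [true]) ++ hmap a z := rfl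

lemma hmap_append (a : ℕ) (x y : List Bool) :
    hmap a (x ++ y) = hmap a x ++ hmap a y := by
  induction x with
  | nil => simp
  | cons b x ih => cases b <;> simp [ih]

@[simp] lemma hmap_eq_nil_iff (a : ℕ) (z : List Bool) : hmap a z = [] ↔ z = [] := by
  cases z with
  | nil => simp
  | cons b z => cases b <;> simp

lemma length_le_hmap (a : ℕ) (z : List Bool) : z.length ≤ (hmap a z).length := by
  induction z with
  | nil => simp
  | cons b z ih => cases b <;> simp <;> omega

lemma hmap_getD_false (a : ℕ) (z : List Bool) (j : ℕ) (hj : j < a) :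
    (hmap a z).getD j false = false := by
  induction z generalizing j with
  | nil => simp
  | cons b z ih =>
    cases b with
    | true =>
      cases j with
      | zero => simp
      | succ j => simpa using ih j (by omega)
    | false =>
      rw [hmap_cons_false]
      rw [List.getD_eq_getElem?_getD, List.append_assoc,
        List.getElem?_append_left (by simpa using hj)]
      simp [List.getElem?_replicate, hj]

lemma stdWord_eq_hmap (d : ℕ → ℕ) : ∀ m, stdWord d (m + 1) = hmap (d 1) (stdWord (dshift d) m)
  | 0 => by simp [stdWord, hmap]
  | 1 => by
      show stdWord d 2 = _
      simp only [stdWord, dshift]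
      simp [hmap_append, hmap]
  | (m + 2) => by
      show stdWord d (m + 3) = _
      have h1 := stdWord_eq_hmap d (m + 1)
      have h2 := stdWord_eq_hmap d m
      show (List.replicate (d (m + 2)) (stdWord d (m + 2))).flatten ++ stdWord d (m+1) = _
      have : stdWord (dshift d) (m + 2) =
          (List.replicate (dshift d (m + 1)) (stdWord (dshift d) (m + 1))).flatten
            ++ stdWord (dshift d) m := rfl
      rw [this, hmap_append, h1, h2]
      congr 1
      · have hds : dshift d (m+1) = d (m+2) := rfl
        rw [hds]
        induction (d (m+2)) with
        | zero => simp
        | succ k ihk => simp only [List.replicate_succ, List.flatten_cons, hmap_append, ihk, h1]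

lemma Fac_infix_closed {d : ℕ → ℕ} {w w' : List Bool} (hw : w ∈ Fac d) (h : w' <:+: w) :
    w' ∈ Fac d := by
  obtain ⟨m, hm⟩ := hw
  exact ⟨m, h.trans hm⟩

lemma mem_Fac_iff {d : ℕ → ℕ} {w : List Bool} :
    w ∈ Fac d ↔ ∃ m, w <:+: hmap (d 1) (stdWord (dshift d) m) := by
  constructor
  · rintro ⟨m, hm⟩
    exact ⟨m, by rwa [← stdWord_eq_hmap]⟩
  · rintro ⟨m, hm⟩
    exact ⟨m, by rwa [stdWord_eq_hmap]⟩

lemma mem_Fac_of_infix_std {d' : ℕ → ℕ} {z : List Bool} {M : ℕ}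
    (h : z <:+: stdWord d' M) : z ∈ Fac d' := by
  cases M with
  | succ m => exact ⟨m, h⟩
  | zero =>
    have h1 : stdWord d' 0 = [true] := rfl
    rw [h1] at h
    have : [true] <:+: stdWord d' 2 := by
      show [true] <:+: (List.replicate (d' 1) (stdWord d' 1)).flatten ++ stdWord d' 0
      exact (List.suffix_append _ _).isInfix
    exact ⟨1, h.trans this⟩

/-- Generic decomposition of an infix of an append. -/
lemma infix_append_cases {α : Type*} {t l₁ l₂ : List α} (h : t <:+: l₁ ++ l₂) :
    t <:+: l₁ ∨ t <:+: l₂ ∨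
      ∃ t₁ t₂, t = t₁ ++ t₂ ∧ t₁ ≠ [] ∧ t₂ ≠ [] ∧ t₁ <:+ l₁ ∧ t₂ <+: l₂ := by
  obtain ⟨s, e, hse⟩ := h
  have hlen := congrArg List.length hse
  simp only [List.length_append] at hlen
  have key : t = ((l₁ ++ l₂).drop s.length).take t.length := by
    rw [← hse]
    have h1 : (s ++ (t ++ e)).drop s.length = t ++ e := List.drop_left
    rw [List.append_assoc, h1, List.take_left]
  by_cases h1 : s.length + t.length ≤ l₁.length
  · left
    have hd : (l₁ ++ l₂).drop s.length = l₁.drop s.length ++ l₂ := by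
      rw [List.drop_append, Nat.sub_eq_zero_of_le (by omega), List.drop_zero]
    rw [hd, List.take_append,
      Nat.sub_eq_zero_of_le (by simp; omega), List.take_zero, List.append_nil] at key
    have : t <+: l₁.drop s.length := key ▸ List.take_prefix _ _
    exact this.isInfix.trans (List.drop_suffix _ _).isInfix
  · by_cases h2 : l₁.length ≤ s.length
    · right; left
      have hd : (l₁ ++ l₂).drop s.length = l₂.drop (s.length - l₁.length) := by
        rw [List.drop_append, List.drop_of_length_le (by omega)]
        simp
      rw [hd] at key
      have : t <+: l₂.drop (s.length - l₁.length) := key ▸ List.take_prefix _ _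
      exact this.isInfix.trans (List.drop_suffix _ _).isInfix
    · right; right
      push_neg at h1 h2
      have hd : (l₁ ++ l₂).drop s.length = l₁.drop s.length ++ l₂ := by
        rw [List.drop_append, Nat.sub_eq_zero_of_le (by omega), List.drop_zero]
      rw [hd, List.take_append,
        List.take_of_length_le (by simp; omega)] at key
      refine ⟨l₁.drop s.length, l₂.take (t.length - (l₁.drop s.length).length), key, ?_, ?_,
        List.drop_suffix _ _, List.take_prefix _ _⟩
      · simp; omega
      · intro hnil
        have h3 := congrArg List.length hnil
        rw [List.length_take, List.length_drop] at h3
        simp only [List.length_nil] at h3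
        omega

lemma getD_append_left' {α : Type*} (l l' : List α) (n : ℕ) (d : α) (h : n < l.length) :
    (l ++ l').getD n d = l.getD n d := by
  simp [List.getD_eq_getElem?_getD, List.getElem?_append_left h]

lemma getD_append_right' {α : Type*} (l l' : List α) (n : ℕ) (d : α) (h : l.length ≤ n) :
    (l ++ l').getD n d = l'.getD (n - l.length) d := by
  simp [List.getD_eq_getElem?_getD, List.getElem?_append_right h]

lemma hmap_split {a : ℕ} :
    ∀ S A B : List Bool, hmap a S = A ++ B → (A = [] ∨ ∃ A', A = A' ++ [true]) →
    ∃ S₁ S₂, S = S₁ ++ S₂ ∧ hmap a S₁ = A ∧ hmap a S₂ = B := by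
  intro S
  induction S with
  | nil =>
    intro A B him _
    have : A = [] ∧ B = [] := by
      simpa using (List.append_eq_nil_iff).mp him.symm
    exact ⟨[], [], by simp, by simp [this.1], by simp [this.2]⟩
  | cons x S' ih =>
    intro A B him hA
    rcases hA with hA | ⟨A', hA⟩
    · exact ⟨[], x :: S', by simp, by simp [hA], by simpa [hA] using him⟩
    cases x with
    | true =>
      rw [hmap_cons_true] at him
      have hAne : A ≠ [] := by simp [hA]
      cases A with
      | nil => exact absurd rfl hAne
      | cons y A₂ =>
        have hy : y = false ∧ hmap a S' = A₂ ++ B := by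
          constructor
          · have := congrArg (List.getD · 0 false) him
            simpa using this.symm
          · have := congrArg List.tail him
            simpa using this
        -- A₂ empty or ends in true
        have hA₂ : A₂ = [] ∨ ∃ A₂', A₂ = A₂' ++ [true] := by
          rcases A₂.eq_nil_or_concat with h | ⟨L, b, hL⟩
          · left; exact h
          · right
            rw [List.concat_eq_append] at hL
            refine ⟨L, ?_⟩
            rw [hL]
            have heq : y :: (L ++ [b]) = A' ++ [true] := by rw [← hL, hA]
            have hb : b = true := by
              have h2 := congrArg List.getLast? heq
              rw [List.getLast?_concat] at h2
              have h3 : (y :: (L ++ [b])).getLast? = some b := by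
                rw [show y :: (L ++ [b]) = (y :: L) ++ [b] by simp, List.getLast?_concat]
              rw [h3] at h2
              exact Option.some_injective _ h2
            rw [hb]
        obtain ⟨S₁, S₂, hS, h1, h2⟩ := ih A₂ B hy.2 hA₂
        refine ⟨true :: S₁, S₂, by simp [hS], ?_, h2⟩
        rw [hmap_cons_true, h1, hy.1]
    | false =>
      rw [hmap_cons_false] at him
      set b : List Bool := List.replicate a false ++ [true] with hb
      by_cases hlen : A.length < a + 1
      · -- A is a short prefix of the block, but ends with true: contradiction
        exfalso
        have htake : A = (A ++ B).take A.length := by rw [List.take_left]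
        rw [← him] at htake
        have hba : b ++ hmap a S' = List.replicate a false ++ ([true] ++ hmap a S') := by
          simp [hb]
        rw [hba, List.take_append, Nat.sub_eq_zero_of_le (by simp; omega),
          List.take_zero, List.append_nil, List.take_replicate] at htake
        have : true ∈ A := by rw [hA]; simp
        rw [htake] at this
        have := List.eq_of_mem_replicate this
        exact Bool.noConfusion this
      · push_neg at hlen
        have hblen : b.length = a + 1 := by simp [hb]
        have htake : A.take (a+1) = b := by
          have h1 : (A ++ B).take (a+1) = A.take (a+1) := by
            rw [List.take_append, Nat.sub_eq_zero_of_le hlen, List.take_zero,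
              List.append_nil]
          have h2 : (b ++ hmap a S').take (a+1) = b := by
            rw [List.take_append, Nat.sub_eq_zero_of_le (le_of_eq hblen.symm),
              List.take_zero, List.append_nil, List.take_of_length_le (le_of_eq hblen)]
          rw [← h1, ← him, h2]
        set A₂ := A.drop (a+1) with hA₂def
        have hAeq : A = b ++ A₂ := by
          rw [← htake, hA₂def, List.take_append_drop]
        have him2 : hmap a S' = A₂ ++ B := by
          have : b ++ hmap a S' = b ++ (A₂ ++ B) := by
            rw [← List.append_assoc, ← hAeq, him]
          exact List.append_cancel_left this
        have hA₂e : A₂ = [] ∨ ∃ A₂', A₂ = A₂' ++ [true] := by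
          by_cases hA2n : A₂ = []
          · left; exact hA2n
          · right
            have hlA' : a + 1 ≤ A'.length := by
              have h1 := congrArg List.length hA
              have h2 := congrArg List.length hAeq
              have h3 : A₂.length ≠ 0 := fun h => hA2n (List.eq_nil_of_length_eq_zero h)
              simp [hb] at h1 h2
              omega
            refine ⟨A'.drop (a+1), ?_⟩
            rw [hA₂def, hA, List.drop_append,
              Nat.sub_eq_zero_of_le hlA', List.drop_zero]
        obtain ⟨S₁, S₂, hS, h1, h2⟩ := ih A₂ B him2 hA₂e
        refine ⟨false :: S₁, S₂, by simp [hS], ?_, h2⟩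
        rw [hmap_cons_false, h1, ← hb, hAeq]

lemma hmap_injective {a : ℕ} (ha : 1 ≤ a) :
    ∀ z₁ z₂ : List Bool, hmap a z₁ = hmap a z₂ → z₁ = z₂ := by
  intro z₁
  induction z₁ with
  | nil =>
    intro z₂ h
    have := (hmap_eq_nil_iff a z₂).mp h.symm
    simp [this]
  | cons x z₁' ih =>
    intro z₂ h
    cases z₂ with
    | nil =>
      exfalso
      have := (hmap_eq_nil_iff a (x :: z₁')).mp h
      simp at this
    | cons y z₂' =>
      have key : ∀ w w' : List Bool,
          hmap a (true :: w) = hmap a (false :: w') → False := by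
        intro w w' hc
        rw [hmap_cons_true, hmap_cons_false] at hc
        have := congrArg (List.getD · a false) hc
        have hl : (false :: hmap a w).getD a false = false := by
          obtain ⟨a', rfl⟩ : ∃ a', a = a' + 1 := ⟨a - 1, by omega⟩
          rw [List.getD_cons_succ]
          exact hmap_getD_false _ _ _ (by omega)
        have hr : ((List.replicate a false ++ [true]) ++ hmap a w').getD a false = true := by
          rw [getD_append_left' _ _ _ _ (by simp)]
          rw [getD_append_right' _ _ _ _ (by simp)]
          simp
        rw [hl, hr] at this
        exact Bool.noConfusion this
      cases x with
      | true =>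
        cases y with
        | true =>
          rw [hmap_cons_true, hmap_cons_true] at h
          have := ih z₂' (List.tail_eq_of_cons_eq h)
          rw [this]
        | false => exact absurd h (key z₁' z₂')
      | false =>
        cases y with
        | true => exact absurd h.symm (key z₂' z₁')
        | false =>
          rw [hmap_cons_false, hmap_cons_false] at h
          have := ih z₂' (List.append_cancel_left h)
          rw [this]

lemma hmap_snoc_false (a : ℕ) (z : List Bool) :
    hmap a (z ++ [false]) = hmap a z ++ (List.replicate a false ++ [true]) := by
  rw [hmap_append]; simp

lemma hmap_snoc_true (a : ℕ) (z : List Bool) :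
    hmap a (z ++ [true]) = hmap a z ++ [false] := by
  rw [hmap_append]; simp

lemma hmap_ends_true {a : ℕ} {z Y : List Bool} (h : hmap a z = Y ++ [true]) :
    ∃ z', z = z' ++ [false] := by
  rcases z.eq_nil_or_concat with rfl | ⟨L, b, hL⟩
  · exfalso
    simp only [hmap_nil] at h
    have := congrArg List.length h
    simp at this
  · rw [List.concat_eq_append] at hL
    subst hL
    cases b with
    | false => exact ⟨L, rfl⟩
    | true =>
      exfalso
      rw [hmap_snoc_true] at h
      have := congrArg List.getLast? h
      rw [List.getLast?_concat, List.getLast?_concat] at this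
      exact Bool.noConfusion (Option.some_injective _ this)

lemma repl_getD (n j : ℕ) : (List.replicate n (false : Bool)).getD j false = false := by
  simp only [List.getD_eq_getElem?_getD, List.getElem?_replicate]
  split <;> simp

lemma infix_cons' {α : Type*} {l₁ l₂ : List α} {x : α} (h : l₁ <:+: l₂) : l₁ <:+: x :: l₂ := by
  obtain ⟨s, e, rfl⟩ := h
  exact ⟨x :: s, e, rfl⟩

lemma blockD {a : ℕ} (X : List Bool) :
    ((List.replicate a false ++ [true]) ++ X).getD a false = true := by
  rw [getD_append_left' _ _ _ _ (by simp)]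
  rw [getD_append_right' _ _ _ _ (by simp)]
  simp

lemma not_true_prefix_hmap {a : ℕ} (ha : 1 ≤ a) (S r : List Bool) :
    ¬ ((true :: r) <+: hmap a S) := by
  rintro ⟨e, he⟩
  have h1 : ((true :: r) ++ e).getD 0 false = true := rfl
  rw [he, hmap_getD_false a S 0 (by omega)] at h1
  exact Bool.noConfusion h1

lemma pair_split {α : Type*} {t₁ t₂ : List α} {x y : α} (h : t₁ ++ t₂ = [x, y])
    (h₁ : t₁ ≠ []) (h₂ : t₂ ≠ []) : t₁ = [x] ∧ t₂ = [y] := by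
  have hl := congrArg List.length h
  simp at hl
  have l1 : t₁.length = 1 := by
    have e1 : t₁.length ≠ 0 := fun hh => h₁ (List.eq_nil_of_length_eq_zero hh)
    have e2 : t₂.length ≠ 0 := fun hh => h₂ (List.eq_nil_of_length_eq_zero hh)
    omega
  constructor
  · have := congrArg (List.take 1) h
    rw [List.take_left' l1] at this
    simpa using this
  · have := congrArg (List.drop 1) h
    rw [List.drop_left' l1] at this
    simpa using this

lemma count_true_replicate (n : ℕ) : (List.replicate n false).count true = 0 := by
  induction n with
  | zero => simp
  | succ n ih => simp [List.replicate_succ, ih]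

lemma count_true_block {a : ℕ} : (List.replicate a false ++ [true]).count true = 1 := by
  simp [count_true_replicate]

lemma no11_hmap {a : ℕ} (ha : 1 ≤ a) : ∀ S : List Bool, ¬ ([true, true] <:+: hmap a S) := by
  intro S
  induction S with
  | nil =>
    intro h
    obtain ⟨s, e, hse⟩ := h
    simp at hse
  | cons x S' ih =>
    intro h
    have hrw : hmap a (x :: S') = (if x then [false] else List.replicate a false ++ [true])
        ++ hmap a S' := by cases x <;> simp
    rw [hrw] at h
    rcases infix_append_cases h with h | h | ⟨t₁, t₂, ht, h₁, h₂, hs, hp⟩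
    · have hc := h.sublist.count_le true
      cases x <;> simp [count_true_block, count_true_replicate] at hc
    · exact ih h
    · obtain ⟨ht₁, ht₂⟩ := pair_split ht.symm h₁ h₂
      rw [ht₂] at hp
      exact not_true_prefix_hmap ha S' [] hp

lemma gaplow_hmap {a : ℕ} (ha : 1 ≤ a) :
    ∀ S : List Bool, ∀ g, g < a →
      ¬ ((true :: (List.replicate g false ++ [true])) <:+: hmap a S) := by
  intro S
  induction S with
  | nil =>
    intro g _ h
    obtain ⟨s, e, hse⟩ := h
    simp at hse
  | cons x S' ih =>
    intro g hg h
    have hrw : hmap a (x :: S') = (if x then [false] else List.replicate a false ++ [true])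
        ++ hmap a S' := by cases x <;> simp
    rw [hrw] at h
    rcases infix_append_cases h with h | h | ⟨t₁, t₂, ht, h₁, h₂, hs, hp⟩
    · have hc := h.sublist.count_le true
      cases x <;> simp [count_true_block, count_true_replicate] at hc
    · exact ih g hg h
    · -- t₁ ++ t₂ = true :: (0^g ++ [true])
      obtain ⟨t₁', rfl⟩ : ∃ t₁', t₁ = true :: t₁' := by
        cases t₁ with
        | nil => exact absurd rfl h₁
        | cons z t₁' =>
          have : z = true := by
            have := congrArg (List.getD · 0 false) ht
            simpa using this
          exact ⟨t₁', by rw [this]⟩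
      cases x with
      | true =>
        have : true ∈ [false] := hs.sublist.subset (by simp)
        simp at this
      | false =>
        simp only [if_neg (by simp : ¬ (false = true))] at hs
        obtain ⟨p, hps⟩ := hs
        have hplen : p.length + (1 + t₁'.length) = a + 1 := by
          have := congrArg List.length hps
          simp at this
          omega
        have hpa : p.length = a := by
          by_contra hne
          have hlt : p.length < a := by omega
          have h1 : (p ++ true :: t₁').getD p.length false = true := by
            rw [getD_append_right' _ _ _ _ (le_refl _)]
            simp
          rw [hps] at h1
          rw [getD_append_left' _ _ _ _ (by simp; omega)] at h1
          simp [List.getD_eq_getElem?_getD, List.getElem?_replicate, hlt] at h1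
        have ht₁' : t₁' = [] := by
          have : t₁'.length = 0 := by omega
          exact List.eq_nil_of_length_eq_zero this
        rw [ht₁'] at ht
        have ht₂ : t₂ = List.replicate g false ++ [true] := by simpa using ht.symm
        rw [ht₂] at hp
        obtain ⟨e, he⟩ := hp
        have h1 : ((List.replicate g false ++ [true]) ++ e).getD g false = true := blockD e
        rw [he, hmap_getD_false a S' g (by omega)] at h1
        exact Bool.noConfusion h1

lemma eq_replicate_parts {t₁ t₂ : List Bool} {n : ℕ}
    (h : t₁ ++ t₂ = List.replicate n false) :
    t₁ = List.replicate t₁.length false ∧ t₂ = List.replicate t₂.length false := by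
  constructor
  · refine List.eq_replicate_of_mem (fun b hb => ?_)
    have : b ∈ List.replicate n false := h ▸ List.mem_append_left _ hb
    exact List.eq_of_mem_replicate this
  · refine List.eq_replicate_of_mem (fun b hb => ?_)
    have : b ∈ List.replicate n false := h ▸ List.mem_append_right _ hb
    exact List.eq_of_mem_replicate this

lemma runbound_hmap {a : ℕ} (ha : 1 ≤ a) :
    ∀ S : List Bool, ¬ ([true, true] <:+: S) →
      ¬ (List.replicate (a + 2) false <:+: hmap a S) := by
  intro S
  induction S with
  | nil =>
    intro _ h
    obtain ⟨s, e, hse⟩ := h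
    simp at hse
  | cons x S' ih =>
    intro hno11 h
    have hrw : hmap a (x :: S') = (if x then [false] else List.replicate a false ++ [true])
        ++ hmap a S' := by cases x <;> simp
    rw [hrw] at h
    rcases infix_append_cases h with h | h | ⟨t₁, t₂, ht, h₁, h₂, hs, hp⟩
    · have := h.length_le
      cases x <;> simp at this <;> omega
    · exact ih (fun hc => hno11 (infix_cons' hc)) h
    · obtain ⟨hr₁, hr₂⟩ := eq_replicate_parts ht.symm
      cases x with
      | false =>
        -- t₁ is a nonempty all-false suffix of 0^a ++ [true]: impossible
        simp only [if_neg (by simp : ¬ (false = true))] at hs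
        obtain ⟨p, hps⟩ := hs
        rcases t₁.eq_nil_or_concat with rfl | ⟨L, bb, hL⟩
        · exact h₁ rfl
        · rw [List.concat_eq_append] at hL
          subst hL
          have hbb : bb = true := by
            have := congrArg List.getLast? hps
            rw [← List.append_assoc, List.getLast?_concat, List.getLast?_concat] at this
            exact Option.some_injective _ this
          have : bb = false := by
            have : bb ∈ List.replicate (L ++ [bb]).length false := by
              rw [← hr₁]; simp
            exact List.eq_of_mem_replicate this
          rw [hbb] at this
          exact Bool.noConfusion this
      | true =>
        -- t₂ is an all-false prefix of hmap a S' of length ≥ a+1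
        have hl₁ : t₁.length ≤ 1 := by
          have := hs.length_le
          simpa using this
        have hl : t₁.length + t₂.length = a + 2 := by
          have := congrArg List.length ht
          simp at this
          omega
        cases S' with
        | nil =>
          obtain ⟨e, he⟩ := hp
          simp only [hmap_nil] at he
          simp at he
          exact h₂ he.1
        | cons y S'' =>
          cases y with
          | true => exact hno11 ⟨[], S'', rfl⟩
          | false =>
            obtain ⟨e, he⟩ := hp
            have h1 : (t₂ ++ e).getD a false = false := by
              rw [getD_append_left' _ _ _ _ (by omega)]
              rw [hr₂]
              exact repl_getD _ _
            rw [he, hmap_cons_false, blockD] at h1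
            exact Bool.noConfusion h1

lemma no11_stdWord {d : ℕ → ℕ} (hd1 : 1 ≤ d 1) :
    ∀ M, ¬ ([true, true] <:+: stdWord d M) := by
  intro M
  cases M with
  | zero =>
    intro h
    obtain ⟨s, e, hse⟩ := h
    have := congrArg List.length hse
    simp [stdWord] at this
    omega
  | succ m =>
    rw [stdWord_eq_hmap]
    exact no11_hmap hd1 _

lemma Fac_no11 {d : ℕ → ℕ} (hd1 : 1 ≤ d 1) {w : List Bool} (hw : w ∈ Fac d)
    (h : [true, true] <:+: w) : False := by
  obtain ⟨m, hm⟩ := hw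
  exact no11_stdWord hd1 (m+1) (h.trans hm)

lemma Fac_gaplow {d : ℕ → ℕ} (hd1 : 1 ≤ d 1) {w : List Bool} (hw : w ∈ Fac d) {g : ℕ}
    (hg : g < d 1) (h : (true :: (List.replicate g false ++ [true])) <:+: w) : False := by
  obtain ⟨m, hm⟩ := mem_Fac_iff.mp hw
  exact gaplow_hmap hd1 _ g hg (h.trans hm)

lemma Fac_runbound {d : ℕ → ℕ} (hd : ∀ i, 1 ≤ i → 0 < d i) {w : List Bool} (hw : w ∈ Fac d)
    (h : List.replicate (d 1 + 2) false <:+: w) : False := by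
  obtain ⟨m, hm⟩ := mem_Fac_iff.mp hw
  have hno11 : ¬ ([true, true] <:+: stdWord (dshift d) m) :=
    no11_stdWord (by have := hd 2 (by omega); exact this) m
  exact runbound_hmap (hd 1 (by omega)) _ hno11 (h.trans hm)

lemma Fac_gaphigh {d : ℕ → ℕ} (hd : ∀ i, 1 ≤ i → 0 < d i) {w : List Bool} (hw : w ∈ Fac d)
    {g : ℕ} (h : (true :: (List.replicate g false ++ [true])) <:+: w) : g ≤ d 1 + 1 := by
  by_contra hc
  push_neg at hc
  apply Fac_runbound hd hw
  have h1 : List.replicate (d 1 + 2) false <:+: List.replicate g false := by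
    refine ⟨[], List.replicate (g - (d 1 + 2)) false, ?_⟩
    rw [List.nil_append, ← List.replicate_add]
    congr 1
    omega
  have h2 : List.replicate g false <:+: true :: (List.replicate g false ++ [true]) :=
    ⟨[true], [true], rfl⟩
  exact (h1.trans h2).trans h

lemma stdWord_ne_nil (d : ℕ → ℕ) : ∀ m, stdWord d m ≠ []
  | 0 => by simp [stdWord]
  | 1 => by simp [stdWord]
  | (m+2) => by
    show (List.replicate (d (m + 1)) (stdWord d (m + 1))).flatten ++ stdWord d m ≠ []
    intro h
    rw [List.append_eq_nil_iff] at h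
    exact stdWord_ne_nil d m h.2

lemma stdLen_pos (d : ℕ → ℕ) : ∀ m, 0 < stdLen d m
  | 0 => by simp [stdLen]
  | 1 => by simp [stdLen]
  | (m+2) => by
    show 0 < d (m + 1) * stdLen d (m + 1) + stdLen d m
    have := stdLen_pos d m
    omega

lemma stdWord_length (d : ℕ → ℕ) : ∀ m, (stdWord d m).length = stdLen d m
  | 0 => by simp [stdWord, stdLen]
  | 1 => by simp [stdWord, stdLen]
  | (m+2) => by
    show ((List.replicate (d (m + 1)) (stdWord d (m + 1))).flatten ++ stdWord d m).length
      = d (m + 1) * stdLen d (m + 1) + stdLen d m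
    rw [List.length_append, List.length_flatten, List.map_replicate, List.sum_replicate,
      smul_eq_mul, stdWord_length d (m+1), stdWord_length d m]

lemma stdLen_lt {d : ℕ → ℕ} (hd : ∀ i, 1 ≤ i → 0 < d i) (m : ℕ) (hm : 1 ≤ m) :
    stdLen d m < stdLen d (m + 1) := by
  obtain ⟨n, rfl⟩ : ∃ n, m = n + 1 := ⟨m - 1, by omega⟩
  show stdLen d (n+1) < d (n + 1) * stdLen d (n + 1) + stdLen d n
  have h1 := stdLen_pos d n
  have h2 := stdLen_pos d (n+1)
  have h3 := hd (n+1) (by omega)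
  have := Nat.le_mul_of_pos_left (stdLen d (n+1)) h3
  omega

lemma stdWord_prefix_succ {d : ℕ → ℕ} (hd : ∀ i, 1 ≤ i → 0 < d i) (m : ℕ) :
    ∃ rest, stdWord d (m + 2) = stdWord d (m + 1) ++ rest ∧ rest ≠ [] := by
  obtain ⟨j, hj⟩ : ∃ j, d (m + 1) = j + 1 := ⟨d (m+1) - 1, by have := hd (m+1) (by omega); omega⟩
  refine ⟨(List.replicate j (stdWord d (m + 1))).flatten ++ stdWord d m, ?_, ?_⟩
  · show (List.replicate (d (m + 1)) (stdWord d (m + 1))).flatten ++ stdWord d m = _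
    rw [hj, List.replicate_succ, List.flatten_cons, List.append_assoc]
  · intro h
    rw [List.append_eq_nil_iff] at h
    exact stdWord_ne_nil d m h.2

lemma right_ext {d : ℕ → ℕ} (hd : ∀ i, 1 ≤ i → 0 < d i) {w : List Bool} (hw : w ∈ Fac d) :
    ∃ b, w ++ [b] ∈ Fac d := by
  obtain ⟨m, s, e, hse⟩ := hw
  cases e with
  | cons b e' =>
    exact ⟨b, m, s, e', by rw [← hse]; simp⟩
  | nil =>
    obtain ⟨rest, hrest, hne⟩ := stdWord_prefix_succ hd m
    obtain ⟨b, e', rfl⟩ : ∃ b e', rest = b :: e' := by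
      cases rest with
      | nil => exact absurd rfl hne
      | cons b e' => exact ⟨b, e', rfl⟩
    refine ⟨b, m + 1, s, e', ?_⟩
    rw [hrest, ← hse]
    simp

lemma left_ext {d : ℕ → ℕ} (hd : ∀ i, 1 ≤ i → 0 < d i) {w : List Bool} (hw : w ∈ Fac d) :
    ∃ b, (b :: w) ∈ Fac d := by
  obtain ⟨m, s, e, hse⟩ := hw
  rcases s.eq_nil_or_concat with rfl | ⟨s', b, hL⟩
  · -- w is a prefix of stdWord d (m+1)
    obtain ⟨j, hj⟩ : ∃ j, d (m + 2) = j + 1 :=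
      ⟨d (m+2) - 1, by have := hd (m+2) (by omega); omega⟩
    have hW := stdWord_ne_nil d (m + 2)
    obtain ⟨W', bb, hWb⟩ := (stdWord d (m + 2)).eq_nil_or_concat.resolve_left hW
    rw [List.concat_eq_append] at hWb
    refine ⟨bb, m + 2, (List.replicate j (stdWord d (m + 2))).flatten ++ W', e, ?_⟩
    show _ = stdWord d (m + 3)
    have hstd : stdWord d (m + 3) =
        (List.replicate (d (m + 2)) (stdWord d (m + 2))).flatten ++ stdWord d (m + 1) := rfl
    rw [hstd, hj, List.replicate_succ', List.flatten_append, List.flatten_cons,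
      List.flatten_nil, List.append_nil, hWb, ← hse]
    simp
  · rw [List.concat_eq_append] at hL
    subst hL
    exact ⟨b, m, s', e, by rw [← hse]; simp⟩

lemma ext_until_true_right {d : ℕ → ℕ} (hd : ∀ i, 1 ≤ i → 0 < d i) :
    ∀ n, ∀ w : List Bool, w ∈ Fac d →
      (∃ i, i < n ∧ w ++ List.replicate i false ++ [true] ∈ Fac d) ∨
        w ++ List.replicate n false ∈ Fac d := by
  intro n
  induction n with
  | zero => intro w hw; right; simpa using hw
  | succ n ih =>
    intro w hw
    rcases ih w hw with ⟨i, hi, hm⟩ | hm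
    · exact Or.inl ⟨i, by omega, hm⟩
    · obtain ⟨b, hb⟩ := right_ext hd hm
      cases b with
      | false =>
        right
        rw [List.append_assoc, ← List.replicate_succ'] at hb
        exact hb
      | true =>
        left
        exact ⟨n, by omega, by rwa [List.append_assoc] at hb ⊢⟩
  
lemma right_to_true {d : ℕ → ℕ} (hd : ∀ i, 1 ≤ i → 0 < d i) {w : List Bool} (hw : w ∈ Fac d) :
    ∃ i, i ≤ d 1 + 1 ∧ w ++ List.replicate i false ++ [true] ∈ Fac d := by
  rcases ext_until_true_right hd (d 1 + 2) w hw with ⟨i, hi, hm⟩ | hm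
  · exact ⟨i, by omega, hm⟩
  · exfalso
    exact Fac_runbound hd hm ⟨w, [], by simp⟩

lemma ext_until_true_left {d : ℕ → ℕ} (hd : ∀ i, 1 ≤ i → 0 < d i) :
    ∀ n, ∀ w : List Bool, w ∈ Fac d →
      (∃ j, j < n ∧ [true] ++ List.replicate j false ++ w ∈ Fac d) ∨
        List.replicate n false ++ w ∈ Fac d := by
  intro n
  induction n with
  | zero => intro w hw; right; simpa using hw
  | succ n ih =>
    intro w hw
    rcases ih w hw with ⟨j, hj, hm⟩ | hm
    · exact Or.inl ⟨j, by omega, hm⟩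
    · obtain ⟨b, hb⟩ := left_ext hd hm
      cases b with
      | false =>
        right
        rwa [show (false :: (List.replicate n false ++ w)) =
          List.replicate (n+1) false ++ w by simp [List.replicate_succ]] at hb
      | true =>
        left
        exact ⟨n, by omega, hb⟩

lemma left_to_true {d : ℕ → ℕ} (hd : ∀ i, 1 ≤ i → 0 < d i) {w : List Bool} (hw : w ∈ Fac d) :
    ∃ j, j ≤ d 1 + 1 ∧ [true] ++ List.replicate j false ++ w ∈ Fac d := by
  rcases ext_until_true_left hd (d 1 + 2) w hw with ⟨j, hj, hm⟩ | hm
  · exact ⟨j, by omega, hm⟩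
  · exfalso
    exact Fac_runbound hd hm ⟨[], w, by simp⟩

lemma count_false_replicate (n : ℕ) : (List.replicate n (false:Bool)).count false = n := by
  induction n with
  | zero => simp
  | succ n ih => simp [List.replicate_succ, ih]

lemma count_false_add_count_true (z : List Bool) : z.count false + z.count true = z.length := by
  induction z with
  | nil => simp
  | cons b z ih => cases b <;> simp [List.count_cons] <;> omega

lemma hmap_length_eq (a : ℕ) (z : List Bool) :
    (hmap a z).length = (a+1) * z.count false + z.count true := by
  induction z with
  | nil => simp
  | cons b z ih =>
    cases b <;> simp [List.count_cons, ih] <;> ring_nf <;> omega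

lemma hmap_count_false (a : ℕ) (z : List Bool) :
    (hmap a z).count false = a * z.count false + z.count true := by
  induction z with
  | nil => simp
  | cons b z ih =>
    cases b <;> simp [List.count_cons, ih, count_false_replicate] <;> ring_nf <;> omega

lemma hmap_count_true (a : ℕ) (z : List Bool) : (hmap a z).count true = z.count false := by
  induction z with
  | nil => simp
  | cons b z ih =>
    cases b <;> simp [List.count_cons, ih, count_true_replicate]

lemma replicate_prefix_replicate {m n : ℕ} (h : m ≤ n) (x : Bool) :
    List.replicate m x <+: List.replicate n x :=
  ⟨List.replicate (n - m) x, by rw [← List.replicate_add]; congr 1; omega⟩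

lemma replicate_false_prefix_hmap_pad (a : ℕ) (δ : List Bool) :
    List.replicate a false <+: hmap a δ ++ List.replicate a false := by
  induction δ with
  | nil => simp
  | cons b δ ih =>
    cases b with
    | true =>
      rw [hmap_cons_true]
      cases a with
      | zero => simp
      | succ a' =>
        have h1 : List.replicate (a'+1) false = false :: List.replicate a' false := by
          simp [List.replicate_succ]
        obtain ⟨t, ht⟩ := (replicate_prefix_replicate (by omega : a' ≤ a'+1) false).trans ih
        refine ⟨t, ?_⟩
        conv_lhs => rw [h1]
        rw [List.cons_append, List.cons_append, ht]
    | false =>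
      rw [hmap_cons_false, List.append_assoc, List.append_assoc]
      exact List.prefix_append _ _

lemma prefix_lift {a : ℕ} {C C' : List Bool} (h : C <+: C') :
    hmap a C ++ List.replicate a false <+: hmap a C' ++ List.replicate a false := by
  obtain ⟨δ, rfl⟩ := h
  obtain ⟨t, ht⟩ := replicate_false_prefix_hmap_pad a δ
  refine ⟨t, ?_⟩
  rw [hmap_append, List.append_assoc, List.append_assoc, ht]

lemma hmap_replicate_true (a j : ℕ) :
    hmap a (List.replicate j true) = List.replicate j false := by
  induction j with
  | zero => simp
  | succ j ih => simp [List.replicate_succ, ih]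

lemma Z_structure {a : ℕ} (ha : 1 ≤ a) {z c : List Bool}
    (him : hmap a z = [false] ++ c ++ [true]) :
    (z = [false] ∧ c = List.replicate (a-1) false) ∨
    (∃ C, z = true :: (C ++ [false]) ∧ c = hmap a C ++ List.replicate a false) ∨
    (∃ crest, c = List.replicate (a-1) false ++ true :: crest) := by
  have him' : hmap a z = ([false] ++ c) ++ [true] := by rw [him, List.append_assoc]
  obtain ⟨z₀, rfl⟩ := hmap_ends_true him'
  have hrepl : List.replicate a false = false :: List.replicate (a-1) false := by
    conv_lhs => rw [show a = (a-1)+1 by omega]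
    rw [List.replicate_succ]
  cases z₀ with
  | nil =>
    left
    rw [hmap_snoc_false, hmap_nil, List.nil_append] at him'
    have h1 : List.replicate a false = [false] ++ c := List.append_cancel_right him'
    rw [hrepl] at h1
    simp at h1
    exact ⟨rfl, h1.symm⟩
  | cons x C =>
    cases x with
    | true =>
      right; left
      refine ⟨C, rfl, ?_⟩
      rw [hmap_snoc_false, hmap_cons_true, ← List.append_assoc] at him'
      have h1 : (false :: hmap a C) ++ List.replicate a false = [false] ++ c :=
        List.append_cancel_right him'
      simpa using h1.symm
    | false =>
      right; right
      rw [hmap_snoc_false, hmap_cons_false] at him'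
      refine ⟨hmap a C ++ List.replicate a false, ?_⟩
      have h1 : ((List.replicate a false ++ [true]) ++ hmap a C) ++ List.replicate a false
          = [false] ++ c := by
        have h2 : (((List.replicate a false ++ [true]) ++ hmap a C) ++ List.replicate a false)
            ++ [true] = ([false] ++ c) ++ [true] := by
          rw [← him']
          simp
        exact List.append_cancel_right h2
      rw [hrepl] at h1
      have := h1.symm
      simp at this
      rw [this, hrepl]

lemma W_structure {a : ℕ} (ha : 1 ≤ a) {W C : List Bool}
    (hW : hmap a W = (hmap a C ++ List.replicate a false) ++ [false, true]) :
    W = C ++ [true, false] := by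
  apply hmap_injective ha
  rw [hW]
  have h2 : hmap a (C ++ [true, false]) =
      hmap a C ++ (false :: (List.replicate a false ++ [true])) := by
    rw [hmap_append]; simp
  rw [h2]
  simp only [List.append_assoc]
  congr 1
  show List.replicate a false ++ [false, true] = false :: (List.replicate a false ++ [true])
  have h3 : List.replicate a false ++ [false, true]
      = (List.replicate a false ++ [false]) ++ [true] := by simp
  have h4 : false :: (List.replicate a false ++ [true])
      = (false :: List.replicate a false) ++ [true] := by simp
  rw [h3, h4, ← List.replicate_succ', ← List.replicate_succ]

lemma ZJ_structure {a : ℕ} (ha : 1 ≤ a) {ZJ : List Bool} {j : ℕ}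
    (him : hmap a ZJ = List.replicate (j + a) false ++ [true]) :
    ZJ = List.replicate j true ++ [false] := by
  apply hmap_injective ha
  rw [him, hmap_snoc_false, hmap_replicate_true, ← List.append_assoc, ← List.replicate_add]

lemma split_first (l : List Bool) :
    (∃ e ρ, l = List.replicate e false ++ true :: ρ) ∨ l = List.replicate l.length false := by
  induction l with
  | nil => right; simp
  | cons b l ih =>
    cases b with
    | true => exact Or.inl ⟨0, l, by simp⟩
    | false =>
      rcases ih with ⟨e, ρ, h⟩ | h
      · exact Or.inl ⟨e + 1, ρ, by rw [List.replicate_succ, List.cons_append, ← h]⟩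
      · right
        rw [List.length_cons, List.replicate_succ, ← h]

lemma split_last (l : List Bool) :
    (∃ τ ρ, l = ρ ++ [true] ++ List.replicate τ false) ∨ l = List.replicate l.length false := by
  induction l with
  | nil => right; simp
  | cons b l ih =>
    rcases ih with ⟨τ, ρ, h⟩ | h
    · exact Or.inl ⟨τ, b :: ρ, by rw [h]; simp⟩
    · cases b with
      | true => exact Or.inl ⟨l.length, [], by rw [← h]; simp⟩
      | false =>
        right
        rw [List.length_cons, List.replicate_succ, ← h]

lemma desub {d : ℕ → ℕ} {W A₁ A₂ T : List Bool} (hW : W ∈ Fac d)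
    (hWeq : W = [true] ++ A₁ ++ A₂ ++ T)
    (h₁ : ∃ A₁', A₁ = A₁' ++ [true]) (h₂ : ∃ A₂', A₂ = A₂' ++ [true]) :
    ∃ Z₁ Z₂, hmap (d 1) Z₁ = A₁ ∧ hmap (d 1) Z₂ = A₂ ∧
      ([false] ++ Z₁ ++ Z₂) ∈ Fac (dshift d) := by
  obtain ⟨M, s, e, hse⟩ := mem_Fac_iff.mp hW
  rw [hWeq] at hse
  have hse' : hmap (d 1) (stdWord (dshift d) M)
      = (s ++ [true]) ++ (A₁ ++ (A₂ ++ (T ++ e))) := by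
    rw [← hse]; simp
  obtain ⟨S₁, S₂', hS, hS₁, hS₂'⟩ := hmap_split _ _ _ hse' (Or.inr ⟨s, rfl⟩)
  obtain ⟨Z₁, S₃, hS2, hZ₁, hS₃⟩ := hmap_split _ _ _ hS₂' (Or.inr h₁)
  obtain ⟨Z₂, S₄, hS3, hZ₂, hS₄⟩ := hmap_split _ _ _ hS₃ (Or.inr h₂)
  obtain ⟨S₁', hS₁'⟩ := hmap_ends_true hS₁
  refine ⟨Z₁, Z₂, hZ₁, hZ₂, ?_⟩
  apply mem_Fac_of_infix_std (M := M)
  rw [hS, hS2, hS3, hS₁']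
  exact ⟨S₁', S₄, by simp⟩

lemma rep_glue (p q : ℕ) (X : List Bool) :
    List.replicate p false ++ (false :: (List.replicate q false ++ X))
      = List.replicate (p + q + 1) false ++ X := by
  rw [show p + q + 1 = p + (q + 1) by omega, List.replicate_add, List.replicate_succ]
  simp

lemma main_lemma : ∀ k₁ : ℕ, ∀ d : ℕ → ℕ, (∀ i, 1 ≤ i → 0 < d i) →
    ∀ c c' : List Bool, ∀ k₂ : ℕ,
    c.length + 1 = k₁ → c'.length + 1 = k₂ →
    ([false, true] ++ c ++ [false, true] ++ c' ++ [false]) ∈ Fac d →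
    ([false] ++ c ++ [true, false] ++ c' ++ [true, false]) ∈ Fac d →
    (c <+: c' ∨ c' <+: c) ∧
    (k₁ < k₂ → ∃ m t, 1 ≤ m ∧ 1 ≤ t ∧ k₁ + 1 = stdLen d (m+1) ∧
      c.count false + 1 = (stdWord d (m+1)).count false ∧
      k₂ + 1 = t * stdLen d (m+1) + stdLen d m ∧
      c'.count false + 1 = t * (stdWord d (m+1)).count false + (stdWord d m).count false) := by
  intro k₁
  induction k₁ using Nat.strong_induction_on with
  | _ k₁ IH =>
  intro d hd c c' k₂ hlc hlc' hX hY
  have ha : 1 ≤ d 1 := hd 1 (le_refl 1)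
  set a := d 1 with ha_def
  have hd' : ∀ i, 1 ≤ i → 0 < dshift d i := fun i hi => hd (i+1) (by omega)
  have ha' : 1 ≤ dshift d 1 := hd' 1 (le_refl 1)
  -- gap facts
  have hG1 : ∀ e ρ, c = List.replicate e false ++ true :: ρ → a ≤ e := by
    intro e ρ hce
    by_contra hlt
    push_neg at hlt
    apply Fac_gaplow ha hX hlt
    refine ⟨[false], ρ ++ [false, true] ++ c' ++ [false], ?_⟩
    rw [hce]; simp
  have hG2 : ∀ e ρ, c' = List.replicate e false ++ true :: ρ → a ≤ e := by
    intro e ρ hce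
    by_contra hlt
    push_neg at hlt
    apply Fac_gaplow ha hX hlt
    refine ⟨[false, true] ++ c ++ [false], ρ ++ [false], ?_⟩
    rw [hce]; simp
  have hG3 : c = List.replicate c.length false → a ≤ c.length + 1 ∧ c.length + 1 ≤ a + 1 := by
    intro hcall
    have hinf : (true :: (List.replicate (c.length + 1) false ++ [true]))
        <:+: ([false, true] ++ c ++ [false, true] ++ c' ++ [false]) := by
      refine ⟨[false], c' ++ [false], ?_⟩
      conv_rhs => rw [hcall]
      rw [show c.length + 1 = c.length + 0 + 1 by omega, ← rep_glue c.length 0]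
      simp
    constructor
    · by_contra hlt
      push_neg at hlt
      exact Fac_gaplow ha hX (by omega) hinf
    · exact Fac_gaphigh hd hX hinf
  have hG4 : c' = List.replicate c'.length false → a ≤ c'.length + 1 ∧ c'.length + 1 ≤ a + 1 := by
    intro hcall
    have hinf : (true :: (List.replicate (c'.length + 1) false ++ [true]))
        <:+: ([false] ++ c ++ [true, false] ++ c' ++ [true, false]) := by
      refine ⟨[false] ++ c, [false], ?_⟩
      conv_rhs => rw [hcall]
      rw [show c'.length + 1 = 0 + c'.length + 1 by omega, ← rep_glue 0 c'.length]
      simp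
    constructor
    · by_contra hlt
      push_neg at hlt
      exact Fac_gaplow ha hY (by omega) hinf
    · exact Fac_gaphigh hd hY hinf
  have hGtau : ∀ τ ρ₂, c' = ρ₂ ++ [true] ++ List.replicate τ false → a ≤ τ := by
    intro τ ρ₂ hcτ
    by_contra hlt
    push_neg at hlt
    apply Fac_gaplow ha hY hlt
    refine ⟨[false] ++ c ++ [true, false] ++ ρ₂, [false], ?_⟩
    rw [hcτ]; simp
  -- left extension of Y
  obtain ⟨j, hjle, hYj⟩ := left_to_true hd hY
  by_cases hbase : c = List.replicate c.length false ∧ k₁ = a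
  · -- BASE CASE: c = 0^{a-1}, k₁ = a
    obtain ⟨hcall, hk₁a⟩ := hbase
    have hlca : c.length = a - 1 := by omega
    have hca : c = List.replicate (a-1) false := by rw [hcall, hlca]
    -- desubstitute [true] ++ 0^j ++ Y
    have hWeq : [true] ++ List.replicate j false
          ++ ([false] ++ c ++ [true, false] ++ c' ++ [true, false])
        = [true] ++ (List.replicate (j + a) false ++ [true])
          ++ ([false] ++ c' ++ [true]) ++ [false] := by
      rw [hca]
      rw [show j + a = j + (a-1) + 1 by omega, ← rep_glue j (a-1)]
      simp
    obtain ⟨ZJ, Z₂, hZJ, hZ₂, P₁⟩ := desub hYj hWeq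
      ⟨List.replicate (j + a) false, rfl⟩ ⟨[false] ++ c', by simp⟩
    have hZJr : ZJ = List.replicate j true ++ [false] := ZJ_structure ha hZJ
    rcases Z_structure ha hZ₂ with ⟨hZ₂f, hc'f⟩ | ⟨C', hZ₂C, hc'C⟩ | ⟨crest, hbad⟩
    · -- c' = 0^{a-1} = c : k₂ = a = k₁
      constructor
      · left; rw [hca, hc'f]
      · intro hk
        have : c'.length = a - 1 := by rw [hc'f]; simp
        omega
    · -- c' = hmap C' ++ 0^a
      constructor
      · left
        rw [hca, hc'C]
        exact (replicate_prefix_replicate (by omega) false).trans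
          (replicate_false_prefix_hmap_pad a C')
      · intro hk
        -- show C' is all-false
        have hC'f : C' = List.replicate C'.length false := by
          rcases split_first C' with ⟨e', ρ'', hC'e⟩ | hC'f
          · exfalso
            -- gap in d' : e' ≥ d 2
            have he' : dshift d 1 ≤ e' := by
              by_contra hlt
              push_neg at hlt
              apply Fac_gaplow ha' P₁ hlt
              refine ⟨[false] ++ ZJ, ρ'' ++ [false], ?_⟩
              rw [hZ₂C, hC'e]; simp
            -- c' contains a true
            rcases split_last c' with ⟨τ, ρ₂, hcτ⟩ | hc'all
            · -- extend X to the right by a true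
              have hτ := hGtau τ ρ₂ hcτ
              obtain ⟨i, hile, hXi⟩ := right_to_true hd hX
              have hgap : τ + 1 + i ≤ a + 1 := by
                apply Fac_gaphigh hd hXi
                refine ⟨[false, true] ++ c ++ [false, true] ++ ρ₂, [], ?_⟩
                rw [hcτ]
                rw [show τ + 1 + i = τ + i + 1 by omega, ← rep_glue τ i]
                simp
              have hi0 : i = 0 := by omega
              rw [hi0] at hXi
              simp only [List.replicate_zero] at hXi
              have hmem : ([true] ++ (c ++ [false, true]) ++ (c' ++ [false, true]) ++ [])
                  ∈ Fac d := by
                apply Fac_infix_closed hXi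
                refine ⟨[false], [], ?_⟩
                simp
              obtain ⟨W₁, W₂, hW₁, hW₂, P₂⟩ := desub hmem rfl
                ⟨c ++ [false], by simp⟩ ⟨c' ++ [false], by simp⟩
              have hW₁f : W₁ = [false] := by
                apply hmap_injective ha
                rw [hW₁, hca]
                show _ = (List.replicate a false ++ [true]) ++ hmap a []
                rw [hmap_nil, List.append_nil]
                rw [show (a:ℕ) = (a-1) + 0 + 1 by omega, ← rep_glue (a-1) 0]
                simp
              have hW₂C : W₂ = C' ++ [true, false] := by
                apply W_structure ha
                rw [hW₂, hc'C]
              rw [hW₁f, hW₂C] at P₂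
              -- P₂ = [false] ++ [false] ++ (C' ++ [true, false]) contains 0^{e'+2}
              apply Fac_runbound hd' P₂
              have hrep : List.replicate (dshift d 1 + 2) false
                  <+: [false] ++ [false] ++ (C' ++ [true, false]) := by
                rw [hC'e]
                have : [false] ++ [false] ++ ((List.replicate e' false ++ true :: ρ'')
                    ++ [true, false]) = List.replicate (e' + 2) false
                      ++ (true :: ρ'' ++ [true, false]) := by
                  rw [show e' + 2 = e' + 1 + 1 by omega, List.replicate_succ,
                    List.replicate_succ]
                  simp
                rw [this]
                exact (replicate_prefix_replicate (by omega) false).trans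
                  (List.prefix_append _ _)
              exact hrep.isInfix
            · -- c' all false but contains a true: count contradiction
              have h1 : c'.count true = C'.count false := by
                rw [hc'C]
                simp [List.count_append, hmap_count_true, count_true_replicate]
              have h2 : c'.count true = 0 := by
                rw [hc'all]
                exact count_true_replicate _
              have h3 : 0 < C'.count false := by
                rw [hC'e, List.count_append, count_false_replicate]
                omega
              omega
          · exact hC'f
        -- compute the conclusion with m = 1, t = |C'| + 1
        set q := C'.length with hq
        have hc'len : c'.length = (a+1) * q + a := by
          rw [hc'C, List.length_append, hmap_length_eq, List.length_replicate, hC'f]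
          rw [count_false_replicate, count_true_replicate]
          omega
        have hc'cnt : c'.count false = a * q + a := by
          rw [hc'C, List.count_append, hmap_count_false, hC'f]
          rw [count_false_replicate, count_true_replicate, count_false_replicate]
          omega
        have hL2 : stdLen d 2 = a + 1 := by
          show d 1 * stdLen d 1 + stdLen d 0 = a + 1
          simp [stdLen, ha_def]
        have hw2 : stdWord d 2 = hmap a [false] := by
          rw [stdWord_eq_hmap]; rfl
        have hcnt2 : (stdWord d 2).count false = a := by
          rw [hw2, hmap_count_false]; simp
        have hL1 : stdLen d 1 = 1 := rfl
        have hcnt1 : (stdWord d 1).count false = 1 := rfl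
        refine ⟨1, q + 1, le_refl 1, by omega, ?_, ?_, ?_, ?_⟩
        · show k₁ + 1 = stdLen d 2
          rw [hL2]; omega
        · show c.count false + 1 = (stdWord d 2).count false
          rw [hcnt2, hca, count_false_replicate]; omega
        · show k₂ + 1 = (q + 1) * stdLen d 2 + stdLen d 1
          rw [hL2, hL1]
          have hr : (q+1) * (a+1) = (a+1)*q + (a+1) := by ring
          linarith [hc'len, hlc', hr]
        · show c'.count false + 1 = (q + 1) * (stdWord d 2).count false + (stdWord d 1).count false
          rw [hcnt2, hcnt1]
          have hr : (q+1) * a = a*q + a := by ring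
          linarith [hc'cnt, hr]
    · exfalso
      have := hG2 (a-1) crest hbad
      omega
  · -- MAIN CASE
    have hj0 : [true] ++ ([false] ++ c ++ [true, false] ++ c' ++ [true, false]) ∈ Fac d := by
      rcases split_first c with ⟨e, ρ, hce⟩ | hcall
      · have he := hG1 e ρ hce
        have hhigh : j + e + 1 ≤ a + 1 := by
          apply Fac_gaphigh hd hYj
          refine ⟨[], ρ ++ [true, false] ++ c' ++ [true, false], ?_⟩
          rw [hce, ← rep_glue j e]
          simp
        have hj' : j = 0 := by omega
        rw [hj'] at hYj
        simpa using hYj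
      · have h3 := hG3 hcall
        have hk1a : k₁ ≠ a := fun h => hbase ⟨hcall, h⟩
        have hhigh : j + c.length + 1 ≤ a + 1 := by
          apply Fac_gaphigh hd hYj
          refine ⟨[], [false] ++ c' ++ [true, false], ?_⟩
          conv_rhs => rw [hcall]
          rw [← rep_glue j c.length]
          simp
        have hj' : j = 0 := by omega
        rw [hj'] at hYj
        simpa using hYj
    have hYeq : [true] ++ ([false] ++ c ++ [true, false] ++ c' ++ [true, false])
        = [true] ++ ([false] ++ c ++ [true]) ++ ([false] ++ c' ++ [true]) ++ [false] := by
      simp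
    obtain ⟨Z₁, Z₂, hZ₁, hZ₂, P⟩ := desub hj0 hYeq ⟨[false] ++ c, by simp⟩ ⟨[false] ++ c', by simp⟩
    have hZcase : ∃ C, Z₁ = true :: (C ++ [false]) ∧ c = hmap a C ++ List.replicate a false := by
      rcases Z_structure ha hZ₁ with ⟨hZ₁f, hcf⟩ | h | ⟨crest, hbad⟩
      · exfalso
        apply hbase
        have hclen : c.length = a - 1 := by rw [hcf]; simp
        exact ⟨by rw [hcf]; simp, by omega⟩
      · exact h
      · exfalso
        have := hG1 (a-1) crest hbad
        omega
    obtain ⟨C, hZ₁C, hcC⟩ := hZcase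
    rcases Z_structure ha hZ₂ with ⟨hZ₂f, hc'f⟩ | ⟨C', hZ₂C, hc'C⟩ | ⟨crest', hbad'⟩
    · -- BASE-A2 : c' = 0^{a-1}, k₂ = a
      constructor
      · right
        rw [hcC, hc'f]
        exact (replicate_prefix_replicate (by omega) false).trans
          (replicate_false_prefix_hmap_pad a C)
      · intro hk
        exfalso
        have h5 : c.length = (hmap a C).length + a := by rw [hcC]; simp
        have h6 : c'.length = a - 1 := by rw [hc'f]; simp
        omega
    · -- the interesting case : c' = hmap a C' ++ 0^a
      rw [hZ₁C, hZ₂C] at P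
      have P' : ([false, true] ++ C ++ [false, true] ++ C' ++ [false]) ∈ Fac (dshift d) := by
        have heq : [false, true] ++ C ++ [false, true] ++ C' ++ [false]
            = [false] ++ (true :: (C ++ [false])) ++ (true :: (C' ++ [false])) := by simp
        rw [heq]; exact P
      rcases split_last c' with ⟨τ, ρ₂, hcτ⟩ | hc'all
      · -- c' ends with [true] ++ 0^τ
        have hτ := hGtau τ ρ₂ hcτ
        obtain ⟨i, hile, hXi⟩ := right_to_true hd hX
        have hgap : τ + i + 1 ≤ a + 1 := by
          apply Fac_gaphigh hd hXi
          refine ⟨[false, true] ++ c ++ [false, true] ++ ρ₂, [], ?_⟩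
          rw [hcτ, ← rep_glue τ i]
          simp
        have hi0 : i = 0 := by omega
        rw [hi0] at hXi
        simp only [List.replicate_zero] at hXi
        have hmem : ([true] ++ (c ++ [false, true]) ++ (c' ++ [false, true]) ++ []) ∈ Fac d := by
          apply Fac_infix_closed hXi
          refine ⟨[false], [], ?_⟩
          simp
        obtain ⟨W₁, W₂, hW₁, hW₂, P₂⟩ := desub hmem rfl
          ⟨c ++ [false], by simp⟩ ⟨c' ++ [false], by simp⟩
        have hW₁C : W₁ = C ++ [true, false] := by
          apply W_structure ha
          rw [hW₁, hcC]
        have hW₂C : W₂ = C' ++ [true, false] := by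
          apply W_structure ha
          rw [hW₂, hc'C]
        rw [hW₁C, hW₂C] at P₂
        have P₂' : ([false] ++ C ++ [true, false] ++ C' ++ [true, false]) ∈ Fac (dshift d) := by
          have heq : [false] ++ C ++ [true, false] ++ C' ++ [true, false]
              = [false] ++ (C ++ [true, false]) ++ (C' ++ [true, false]) := by simp
          rw [heq]; exact P₂
        have hK : C.length + 1 < k₁ := by
          have h5 : c.length = (hmap a C).length + a := by rw [hcC]; simp
          have h6 := length_le_hmap a C
          omega
        obtain ⟨hpre', hmain'⟩ := IH (C.length + 1) hK (dshift d) hd' C C' (C'.length + 1)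
          rfl rfl P' P₂'
        constructor
        · rcases hpre' with h | h
          · left; rw [hcC, hc'C]; exact prefix_lift h
          · right; rw [hcC, hc'C]; exact prefix_lift h
        · intro hk
          have hCC' : C <+: C' := by
            rcases hpre' with h | h
            · exact h
            · exfalso
              have h7 := (prefix_lift (a := a) h).length_le
              rw [← hc'C, ← hcC] at h7
              omega
          have hCne : C.length ≠ C'.length := by
            intro he
            have hCeq : C = C' := hCC'.eq_of_length he
            have hcc : c = c' := by rw [hcC, hc'C, hCeq]
            have := congrArg List.length hcc
            omega
          have hKlt : C.length + 1 < C'.length + 1 := by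
            have := hCC'.length_le
            omega
          obtain ⟨m', t, hm', ht', hL1, hF1, hL2, hF2⟩ := hmain' hKlt
          have hw1 : stdWord d (m' + 1 + 1) = hmap a (stdWord (dshift d) (m' + 1)) :=
            stdWord_eq_hmap d (m' + 1)
          have hw0 : stdWord d (m' + 1) = hmap a (stdWord (dshift d) m') :=
            stdWord_eq_hmap d m'
          have e2 : (stdWord (dshift d) (m' + 1)).count false
              + (stdWord (dshift d) (m' + 1)).count true = stdLen (dshift d) (m' + 1) := by
            rw [← stdWord_length]; exact count_false_add_count_true _
          have e3 : (stdWord (dshift d) m').count false + (stdWord (dshift d) m').count true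
              = stdLen (dshift d) m' := by
            rw [← stdWord_length]; exact count_false_add_count_true _
          have e1 : C.count false + C.count true = C.length := count_false_add_count_true C
          have e4 : C'.count false + C'.count true = C'.length := count_false_add_count_true C'
          have hT1e : (stdWord (dshift d) (m' + 1)).count true = C.count true + 1 := by omega
          have hT2e : C'.count true + 1
              = t * (stdWord (dshift d) (m' + 1)).count true
                + (stdWord (dshift d) m').count true := by
            have hx : t * stdLen (dshift d) (m' + 1)
                = t * (stdWord (dshift d) (m' + 1)).count false
                  + t * (stdWord (dshift d) (m' + 1)).count true := by
              rw [← e2]; ring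
            linarith [hL2, hF2, e3, e4, hx]
          have g1 : stdLen d (m' + 1 + 1) = (a + 1) * (stdWord (dshift d) (m' + 1)).count false
              + (stdWord (dshift d) (m' + 1)).count true := by
            rw [← stdWord_length, hw1, hmap_length_eq]
          have g3 : (stdWord d (m' + 1 + 1)).count false
              = a * (stdWord (dshift d) (m' + 1)).count false
                + (stdWord (dshift d) (m' + 1)).count true := by
            rw [hw1, hmap_count_false]
          have g5 : stdLen d (m' + 1) = (a + 1) * (stdWord (dshift d) m').count false
              + (stdWord (dshift d) m').count true := by
            rw [← stdWord_length, hw0, hmap_length_eq]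
          have g7 : (stdWord d (m' + 1)).count false = a * (stdWord (dshift d) m').count false
              + (stdWord (dshift d) m').count true := by
            rw [hw0, hmap_count_false]
          have g2 : c.length = (a + 1) * C.count false + C.count true + a := by
            rw [hcC, List.length_append, hmap_length_eq, List.length_replicate]
          have g6 : c'.length = (a + 1) * C'.count false + C'.count true + a := by
            rw [hc'C, List.length_append, hmap_length_eq, List.length_replicate]
          have g4 : c.count false = a * C.count false + C.count true + a := by
            rw [hcC, List.count_append, hmap_count_false, count_false_replicate]
          have g8 : c'.count false = a * C'.count false + C'.count true + a := by
            rw [hc'C, List.count_append, hmap_count_false, count_false_replicate]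
          refine ⟨m' + 1, t, by omega, ht', ?_, ?_, ?_, ?_⟩
          · rw [g1, ← hF1, hT1e]
            have hr : (a+1) * (C.count false + 1) = (a+1) * C.count false + (a+1) := by ring
            linarith [g2, hlc, hr]
          · rw [g3, ← hF1, hT1e]
            have hr : a * (C.count false + 1) = a * C.count false + a := by ring
            linarith [g4, hr]
          · rw [g1, g5]
            have hr1 : t * ((a+1) * (stdWord (dshift d) (m' + 1)).count false
                  + (stdWord (dshift d) (m' + 1)).count true)
                + ((a+1) * (stdWord (dshift d) m').count false
                  + (stdWord (dshift d) m').count true)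
                = (a+1) * (t * (stdWord (dshift d) (m' + 1)).count false
                    + (stdWord (dshift d) m').count false)
                  + (t * (stdWord (dshift d) (m' + 1)).count true
                    + (stdWord (dshift d) m').count true) := by ring
            rw [hr1, ← hF2, ← hT2e]
            have hr2 : (a+1) * (C'.count false + 1) = (a+1) * C'.count false + (a+1) := by ring
            linarith [g6, hlc', hr2]
          · rw [g3, g7]
            have hr3 : t * (a * (stdWord (dshift d) (m' + 1)).count false
                  + (stdWord (dshift d) (m' + 1)).count true)
                + (a * (stdWord (dshift d) m').count false
                  + (stdWord (dshift d) m').count true)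
                = a * (t * (stdWord (dshift d) (m' + 1)).count false
                    + (stdWord (dshift d) m').count false)
                  + (t * (stdWord (dshift d) (m' + 1)).count true
                    + (stdWord (dshift d) m').count true) := by ring
            rw [hr3, ← hF2, ← hT2e]
            have hr4 : a * (C'.count false + 1) = a * C'.count false + a := by ring
            linarith [g8, hr4]
      · -- c' all false : forces C' = [], k₂ = a + 1
        have h4 := hG4 hc'all
        have h5 : c'.length = (hmap a C').length + a := by rw [hc'C]; simp
        have h6 := length_le_hmap a C'
        have hC'nil : C' = [] := by
          have : C'.length = 0 := by omega
          exact List.eq_nil_of_length_eq_zero this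
        constructor
        · right
          rw [hcC, hc'C, hC'nil]
          simpa using replicate_false_prefix_hmap_pad a C
        · intro hk
          exfalso
          have h7 : c.length = (hmap a C).length + a := by rw [hcC]; simp
          omega
    · exfalso
      have := hG2 (a-1) crest' hbad'
      omega

lemma getD_eq_getElem' {α : Type*} (l : List α) (n : ℕ) (d : α) (h : n < l.length) :
    l.getD n d = l[n] := by
  rw [List.getD_eq_getElem?_getD, List.getElem?_eq_getElem h]
  rfl

lemma drop_eq_getD_cons {α : Type*} {w : List α} {p : ℕ} (d : α) (h : p < w.length) :
    w.drop p = w.getD p d :: w.drop (p+1) := by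
  rw [getD_eq_getElem' _ _ _ h]
  exact List.drop_eq_getElem_cons h

lemma drop_take_decomp {α : Type*} (w : List α) (s L : ℕ) :
    w.drop s = (w.drop s).take L ++ w.drop (s + L) := by
  conv_lhs => rw [← List.take_append_drop L (w.drop s)]
  rw [List.drop_drop]

lemma length_take_drop {α : Type*} (w : List α) (s L : ℕ) (h : s + L ≤ w.length) :
    ((w.drop s).take L).length = L := by
  simp
  omega

lemma getD_take_drop {α : Type*} (w : List α) (s L x : ℕ) (d : α) (hx : x < L)
    (hb : s + L ≤ w.length) :
    ((w.drop s).take L).getD x d = w.getD (s + x) d := by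
  have h1 : x < ((w.drop s).take L).length := by simp; omega
  rw [getD_eq_getElem' _ _ _ h1, getD_eq_getElem' _ _ _ (by omega : s + x < w.length)]
  rw [List.getElem_take, List.getElem_drop]

lemma step_up {x y u v : Bool}
    (h : ((y.toNat : ℤ)) = (x.toNat : ℤ) + (u.toNat : ℤ) - (v.toNat : ℤ))
    (hx : x = false) (hy : y = true) : u = true ∧ v = false := by
  subst hx hy
  cases u <;> cases v <;> simp_all

lemma step_down {x y u v : Bool}
    (h : ((y.toNat : ℤ)) = (x.toNat : ℤ) + (u.toNat : ℤ) - (v.toNat : ℤ))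
    (hx : x = true) (hy : y = false) : u = false ∧ v = true := by
  subst hx hy
  cases u <;> cases v <;> simp_all

lemma step_eq {x y u v : Bool}
    (h : ((y.toNat : ℤ)) = (x.toNat : ℤ) + (u.toNat : ℤ) - (v.toNat : ℤ))
    (hxy : x = y) : u = v := by
  subst hxy
  cases x <;> cases u <;> cases v <;> simp_all


/-- If `u, v ∈ Fac(d)` are words of length `n`, the pair `(u,v)` generates a
word `r` of length `n+1`, and `r` contains a factor `0 1 0^{k₁} 1 0^{k₂} 1`
with `k₂ > k₁ > 0`, then `k₁ = l_m - 1` for some `m ≥ 1` and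
`(k₂ + 1) mod l_m = l_{m-1}`. -/
theorem factor_structure_of_generated (d : ℕ → ℕ) (hd : ∀ i, 1 ≤ i → 0 < d i)
    (n : ℕ) (u v r : List Bool)
    (hu : u ∈ Fac d) (hv : v ∈ Fac d)
    (hul : u.length = n) (hvl : v.length = n) (hr : r.length = n + 1)
    (hgen : Generates u v r) (k₁ k₂ : ℕ) (hk₁ : 0 < k₁) (hk₂ : k₁ < k₂)
    (hfac : (false :: true :: (List.replicate k₁ false ++ [true]
        ++ List.replicate k₂ false ++ [true])) <:+: r) :
    ∃ m : ℕ, 1 ≤ m ∧ k₁ = stdLen d (m + 1) - 1 ∧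
      (k₂ + 1) % stdLen d (m + 1) = stdLen d m := by
  obtain ⟨s, e, hse⟩ := hfac
  set pat := false :: true :: (List.replicate k₁ false ++ [true]
      ++ List.replicate k₂ false ++ [true]) with hpat
  set p := s.length with hp
  have hpatlen : pat.length = k₁ + k₂ + 4 := by
    rw [hpat]
    simp
    omega
  have hlen : p + (k₁ + k₂ + 4) + e.length = n + 1 := by
    have h0 := congrArg List.length hse
    rw [List.length_append, List.length_append, hpatlen, hr] at h0
    omega
  -- r values from the pattern
  have hrv : ∀ q, q < k₁ + k₂ + 4 → r.getD (p + q) false = pat.getD q false := by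
    intro q hq
    rw [← hse, List.append_assoc, getD_append_right' _ _ _ _ (by omega : s.length ≤ p + q),
      show p + q - s.length = q by omega,
      getD_append_left' _ _ _ _ (by rw [hpatlen]; omega)]
  -- pattern values
  have pv0 : pat.getD 0 false = false := rfl
  have pv1 : pat.getD 1 false = true := rfl
  have pvA : ∀ x, x < k₁ → pat.getD (2 + x) false = false := by
    intro x hx
    rw [show 2 + x = (x + 1) + 1 by omega, hpat, List.getD_cons_succ, List.getD_cons_succ]
    rw [getD_append_left' _ _ _ _ (by simp only [List.length_append, List.length_replicate, List.length_cons, List.length_nil]; omega)]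
    rw [getD_append_left' _ _ _ _ (by simp only [List.length_append, List.length_replicate, List.length_cons, List.length_nil]; omega)]
    rw [getD_append_left' _ _ _ _ (by simp only [List.length_append, List.length_replicate, List.length_cons, List.length_nil]; omega)]
    exact repl_getD _ _
  have pvB : pat.getD (k₁ + 2) false = true := by
    rw [show k₁ + 2 = (k₁ + 1) + 1 by omega, hpat, List.getD_cons_succ, List.getD_cons_succ]
    rw [getD_append_left' _ _ _ _ (by simp only [List.length_append, List.length_replicate, List.length_cons, List.length_nil]; omega)]
    rw [getD_append_left' _ _ _ _ (by simp only [List.length_append, List.length_replicate, List.length_cons, List.length_nil]; omega)]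
    rw [getD_append_right' _ _ _ _ (by simp only [List.length_replicate]; omega)]
    rw [show k₁ - (List.replicate k₁ (false:Bool)).length = 0 by
      simp only [List.length_replicate]; omega]
    rfl
  have pvC : ∀ x, x < k₂ → pat.getD (k₁ + 3 + x) false = false := by
    intro x hx
    rw [show k₁ + 3 + x = (k₁ + 1 + x + 1) + 1 by omega, hpat,
      List.getD_cons_succ, List.getD_cons_succ]
    rw [getD_append_left' _ _ _ _ (by simp only [List.length_append, List.length_replicate, List.length_cons, List.length_nil]; omega)]
    rw [getD_append_right' _ _ _ _ (by simp only [List.length_append, List.length_replicate, List.length_cons, List.length_nil]; omega)]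
    rw [show k₁ + 1 + x - (List.replicate k₁ (false:Bool) ++ [true]).length = x by
      simp only [List.length_append, List.length_replicate, List.length_cons, List.length_nil]
      omega]
    exact repl_getD _ _
  have pvD : pat.getD (k₁ + k₂ + 3) false = true := by
    rw [show k₁ + k₂ + 3 = (k₁ + k₂ + 1 + 1) + 1 by omega, hpat,
      List.getD_cons_succ, List.getD_cons_succ]
    rw [getD_append_right' _ _ _ _ (by simp only [List.length_append, List.length_replicate, List.length_cons, List.length_nil]; omega)]
    rw [show k₁ + k₂ + 1 - (List.replicate k₁ (false:Bool) ++ [true]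
      ++ List.replicate k₂ false).length = 0 by
      simp only [List.length_append, List.length_replicate, List.length_cons, List.length_nil]
      omega]
    rfl
  -- the generation steps
  have hstep : ∀ q, q ≤ k₁ + k₂ + 2 →
      ((r.getD (p + q + 1) false).toNat : ℤ) = ((r.getD (p + q) false).toNat : ℤ)
        + ((u.getD (p + q) false).toNat : ℤ) - ((v.getD (p + q) false).toNat : ℤ) := by
    intro q hq
    exact hgen (p + q) (by rw [hul]; omega)
  -- boundary values
  have h01 := step_up (hstep 0 (by omega))
    (by rw [hrv 0 (by omega)]; exact pv0)
    (by rw [show p + 0 + 1 = p + 1 by omega, hrv 1 (by omega)]; exact pv1)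
  have h12 := step_down (hstep 1 (by omega))
    (by rw [hrv 1 (by omega)]; exact pv1)
    (by rw [show p + 1 + 1 = p + 2 by omega, hrv 2 (by omega)];
        rw [show (2:ℕ) = 2 + 0 by omega]; exact pvA 0 (by omega))
  have hA := step_up (hstep (k₁ + 1) (by omega))
    (by rw [hrv (k₁ + 1) (by omega), show k₁ + 1 = 2 + (k₁ - 1) by omega]
        exact pvA (k₁ - 1) (by omega))
    (by rw [show p + (k₁ + 1) + 1 = p + (k₁ + 2) by omega, hrv (k₁ + 2) (by omega)]
        exact pvB)
  have hB := step_down (hstep (k₁ + 2) (by omega))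
    (by rw [hrv (k₁ + 2) (by omega)]; exact pvB)
    (by rw [show p + (k₁ + 2) + 1 = p + (k₁ + 3) by omega, hrv (k₁ + 3) (by omega),
        show k₁ + 3 = k₁ + 3 + 0 by omega]
        exact pvC 0 (by omega))
  have hC := step_up (hstep (k₁ + k₂ + 2) (by omega))
    (by rw [hrv (k₁ + k₂ + 2) (by omega), show k₁ + k₂ + 2 = k₁ + 3 + (k₂ - 1) by omega]
        exact pvC (k₂ - 1) (by omega))
    (by rw [show p + (k₁ + k₂ + 2) + 1 = p + (k₁ + k₂ + 3) by omega,
        hrv (k₁ + k₂ + 3) (by omega)]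
        exact pvD)
  have hgap1 : ∀ x, x < k₁ - 1 → u.getD (p + (2 + x)) false = v.getD (p + (2 + x)) false := by
    intro x hx
    apply step_eq (hstep (2 + x) (by omega))
    rw [hrv (2 + x) (by omega), show p + (2 + x) + 1 = p + (2 + (x + 1)) by omega,
      hrv (2 + (x + 1)) (by omega), pvA x (by omega), pvA (x + 1) (by omega)]
  have hgap2 : ∀ x, x < k₂ - 1 →
      u.getD (p + (k₁ + 3 + x)) false = v.getD (p + (k₁ + 3 + x)) false := by
    intro x hx
    apply step_eq (hstep (k₁ + 3 + x) (by omega))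
    rw [hrv (k₁ + 3 + x) (by omega), show p + (k₁ + 3 + x) + 1 = p + (k₁ + 3 + (x + 1)) by omega,
      hrv (k₁ + 3 + (x + 1)) (by omega), pvC x (by omega), pvC (x + 1) (by omega)]
  -- clean value facts
  have hv0 : v.getD p false = false := by have := h01.2; rwa [show p + 0 = p by omega] at this
  have hu0 : u.getD p false = true := by have := h01.1; rwa [show p + 0 = p by omega] at this
  have hv1 : v.getD (p + 1) false = true := h12.2
  have hu1 : u.getD (p + 1) false = false := h12.1
  have hv2 : v.getD (p + k₁ + 1) false = false := by
    have := hA.2; rwa [show p + (k₁ + 1) = p + k₁ + 1 by omega] at this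
  have hu2 : u.getD (p + k₁ + 1) false = true := by
    have := hA.1; rwa [show p + (k₁ + 1) = p + k₁ + 1 by omega] at this
  have hv3 : v.getD (p + k₁ + 2) false = true := by
    have := hB.2; rwa [show p + (k₁ + 2) = p + k₁ + 2 by omega] at this
  have hu3 : u.getD (p + k₁ + 2) false = false := by
    have := hB.1; rwa [show p + (k₁ + 2) = p + k₁ + 2 by omega] at this
  have hv4 : v.getD (p + k₁ + k₂ + 2) false = false := by
    have := hC.2; rwa [show p + (k₁ + k₂ + 2) = p + k₁ + k₂ + 2 by omega] at this
  have hu4 : u.getD (p + k₁ + k₂ + 2) false = true := by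
    have := hC.1; rwa [show p + (k₁ + k₂ + 2) = p + k₁ + k₂ + 2 by omega] at this
  -- the words c and c'
  set c : List Bool := (v.drop (p + 2)).take (k₁ - 1) with hcdef
  set c' : List Bool := (v.drop (p + k₁ + 3)).take (k₂ - 1) with hc'def
  have hclen : c.length = k₁ - 1 := length_take_drop v (p + 2) (k₁ - 1) (by rw [hvl]; omega)
  have hc'len : c'.length = k₂ - 1 :=
    length_take_drop v (p + k₁ + 3) (k₂ - 1) (by rw [hvl]; omega)
  -- decomposition of v.drop p
  have hvd : v.drop p = [false, true] ++ c ++ [false, true] ++ c'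
      ++ ([false] ++ v.drop (p + k₁ + k₂ + 3)) := by
    rw [drop_eq_getD_cons false (show p < v.length by rw [hvl]; omega),
      drop_eq_getD_cons false (show p + 1 < v.length by rw [hvl]; omega),
      show p + 1 + 1 = p + 2 by omega,
      drop_take_decomp v (p + 2) (k₁ - 1), ← hcdef,
      show p + 2 + (k₁ - 1) = p + k₁ + 1 by omega,
      drop_eq_getD_cons false (show p + k₁ + 1 < v.length by rw [hvl]; omega),
      drop_eq_getD_cons false (show p + k₁ + 1 + 1 < v.length by rw [hvl]; omega),
      show p + k₁ + 1 + 1 = p + k₁ + 2 by omega,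
      show p + k₁ + 2 + 1 = p + k₁ + 3 by omega,
      drop_take_decomp v (p + k₁ + 3) (k₂ - 1), ← hc'def,
      show p + k₁ + 3 + (k₂ - 1) = p + k₁ + k₂ + 2 by omega,
      drop_eq_getD_cons false (show p + k₁ + k₂ + 2 < v.length by rw [hvl]; omega),
      show p + k₁ + k₂ + 2 + 1 = p + k₁ + k₂ + 3 by omega,
      hv0, hv1, hv2, hv3, hv4]
    simp
  -- u agrees with v on the two gap segments
  have hcu : (u.drop (p + 2)).take (k₁ - 1) = c := by
    apply List.ext_getElem
    · rw [length_take_drop u (p + 2) (k₁ - 1) (by rw [hul]; omega), hclen]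
    · intro x hx1 hx2
      have hxlt : x < k₁ - 1 := by
        rwa [length_take_drop u (p + 2) (k₁ - 1) (by rw [hul]; omega)] at hx1
      have h1 := getD_take_drop u (p + 2) (k₁ - 1) x false hxlt (by rw [hul]; omega)
      have h2 := getD_take_drop v (p + 2) (k₁ - 1) x false hxlt (by rw [hvl]; omega)
      rw [show p + 2 + x = p + (2 + x) by omega] at h1 h2
      rw [← getD_eq_getElem' _ _ false hx1, ← getD_eq_getElem' _ _ false hx2, hcdef, h1, h2]
      exact hgap1 x hxlt
  have hcu' : (u.drop (p + k₁ + 3)).take (k₂ - 1) = c' := by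
    apply List.ext_getElem
    · rw [length_take_drop u (p + k₁ + 3) (k₂ - 1) (by rw [hul]; omega), hc'len]
    · intro x hx1 hx2
      have hxlt : x < k₂ - 1 := by
        rwa [length_take_drop u (p + k₁ + 3) (k₂ - 1) (by rw [hul]; omega)] at hx1
      have h1 := getD_take_drop u (p + k₁ + 3) (k₂ - 1) x false hxlt (by rw [hul]; omega)
      have h2 := getD_take_drop v (p + k₁ + 3) (k₂ - 1) x false hxlt (by rw [hvl]; omega)
      rw [show p + k₁ + 3 + x = p + (k₁ + 3 + x) by omega] at h1 h2
      rw [← getD_eq_getElem' _ _ false hx1, ← getD_eq_getElem' _ _ false hx2, hc'def, h1, h2]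
      exact hgap2 x hxlt
  -- decomposition of u.drop p
  have hud : u.drop p = [true, false] ++ c ++ [true, false] ++ c'
      ++ ([true] ++ u.drop (p + k₁ + k₂ + 3)) := by
    rw [drop_eq_getD_cons false (show p < u.length by rw [hul]; omega),
      drop_eq_getD_cons false (show p + 1 < u.length by rw [hul]; omega),
      show p + 1 + 1 = p + 2 by omega,
      drop_take_decomp u (p + 2) (k₁ - 1), hcu,
      show p + 2 + (k₁ - 1) = p + k₁ + 1 by omega,
      drop_eq_getD_cons false (show p + k₁ + 1 < u.length by rw [hul]; omega),
      drop_eq_getD_cons false (show p + k₁ + 1 + 1 < u.length by rw [hul]; omega),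
      show p + k₁ + 1 + 1 = p + k₁ + 2 by omega,
      show p + k₁ + 2 + 1 = p + k₁ + 3 by omega,
      drop_take_decomp u (p + k₁ + 3) (k₂ - 1), hcu',
      show p + k₁ + 3 + (k₂ - 1) = p + k₁ + k₂ + 2 by omega,
      drop_eq_getD_cons false (show p + k₁ + k₂ + 2 < u.length by rw [hul]; omega),
      show p + k₁ + k₂ + 2 + 1 = p + k₁ + k₂ + 3 by omega,
      hu0, hu1, hu2, hu3, hu4]
    simp
  -- memberships
  have hXmem : ([false, true] ++ c ++ [false, true] ++ c' ++ [false]) ∈ Fac d := by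
    apply Fac_infix_closed hv
    refine ⟨v.take p, v.drop (p + k₁ + k₂ + 3), ?_⟩
    conv_rhs => rw [← List.take_append_drop p v, hvd]
    simp
  have hW0mem : ([false] ++ c ++ [true, false] ++ c' ++ [true]) ∈ Fac d := by
    apply Fac_infix_closed hu
    refine ⟨u.take p ++ [true], u.drop (p + k₁ + k₂ + 3), ?_⟩
    conv_rhs => rw [← List.take_append_drop p u, hud]
    simp
  have hYmem : ([false] ++ c ++ [true, false] ++ c' ++ [true, false]) ∈ Fac d := by
    obtain ⟨b, hb⟩ := right_ext hd hW0mem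
    cases b with
    | false =>
      have heq : ([false] ++ c ++ [true, false] ++ c' ++ [true]) ++ [false]
          = [false] ++ c ++ [true, false] ++ c' ++ [true, false] := by simp
      rwa [heq] at hb
    | true =>
      exfalso
      apply Fac_no11 (hd 1 (le_refl 1)) hb
      refine ⟨[false] ++ c ++ [true, false] ++ c', [], ?_⟩
      simp
  -- apply the main lemma
  obtain ⟨-, hmain⟩ := main_lemma k₁ d hd c c' k₂ (by omega) (by omega) hXmem hYmem
  obtain ⟨m, t, hm, ht, hL, -, hK2, -⟩ := hmain hk₂
  have hlt : stdLen d m < stdLen d (m + 1) := stdLen_lt hd m hm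
  refine ⟨m, hm, by omega, ?_⟩
  rw [hK2, Nat.mul_comm t (stdLen d (m+1)), Nat.mul_add_mod, Nat.mod_eq_of_lt hlt]
end
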